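/- Let k be a commutative ring, X and Y finite posets, and F : Y → J(X) an order-preserving map into the poset of lower sets of X. Fix y ∈ Y. Define a functor (i_y)_* : F_{F(y),k} → F_{Γ,k} by sending φ to the functor whose value at (a,b) ∈ Γ is φ(a) if b ≤ y and 0 otherwise, with transition map for (a,b) ≤ (c,d) equal to φ(a ≤ c) when both b ≤ y and d ≤ y and zero otherwise. Then (i_y)_* is right adjoint to the restriction functor i_y^{-1} : F_{Γ,k} → F_{F(y),k} given by precomposition with i_y. -/

import Mathlib

open CategoryTheory
namespace PaperInterval

variable {X Y : Type} [PartialOrder X] [PartialOrder Y]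

/-- The poset `Γ` of generalized intervals attached to an order-preserving map
`F : Y → J(X)`. -/
def Gam (F : Y →o LowerSet X) : Type := {p : X × Y // p.1 ∈ F p.2}

instance (F : Y →o LowerSet X) : PartialOrder (Gam F) :=
  inferInstanceAs (PartialOrder {p : X × Y // p.1 ∈ F p.2})

/-- The poset `F(y) ⊆ X` (a lower set of `X`), seen as a poset. -/
def FyP (F : Y →o LowerSet X) (y : Y) : Type := {x : X // x ∈ F y}

instance (F : Y →o LowerSet X) (y : Y) : PartialOrder (FyP F y) :=
  inferInstanceAs (PartialOrder {x : X // x ∈ F y})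

/-- The order embedding `i_y : F(y) → Γ`, `x ↦ (x, y)`. -/
def iy (F : Y →o LowerSet X) (y : Y) (x : FyP F y) : Gam F := ⟨(x.1, y), x.2⟩

lemma iy_monotone (F : Y →o LowerSet X) (y : Y) : Monotone (iy F y) :=
  fun _ _ h => ⟨h, le_rfl⟩

/-- `i_y` as a functor. -/
def iyFunctor (F : Y →o LowerSet X) (y : Y) : FyP F y ⥤ Gam F :=
  (iy_monotone F y).functor

/-- The restriction functor `i_y⁻¹ : F_{Γ,k} → F_{F(y),k}` (precomposition with `i_y`). -/
def res (k : Type) [CommRing k] (F : Y →o LowerSet X) (y : Y) :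
    (Gam F ⥤ ModuleCat.{0} k) ⥤ (FyP F y ⥤ ModuleCat.{0} k) :=
  (Functor.whiskeringLeft _ _ _).obj (iyFunctor F y)

lemma mem_of_le (F : Y →o LowerSet X) {p : Gam F} {y : Y} (h : p.1.2 ≤ y) :
    p.1.1 ∈ F y := F.monotone h p.2

/-- The value of the right adjoint `(i_y)⋆` on objects:
`((i_y)⋆ φ)(a,b) = φ(a)` if `b ≤ y` and `0` otherwise. -/
noncomputable def pushObj (k : Type) [CommRing k] (F : Y →o LowerSet X) (y : Y)
    (φ : FyP F y ⥤ ModuleCat.{0} k) : Gam F ⥤ ModuleCat.{0} k where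
  obj p := ModuleCat.of k (∀ h : PLift (p.1.2 ≤ y), φ.obj ⟨p.1.1, mem_of_le F h.down⟩)
  map {p q} f := ModuleCat.ofHom
    { toFun := fun u h =>
        φ.map (homOfLE (show (⟨p.1.1, mem_of_le F ((leOfHom f).2.trans h.down)⟩ : FyP F y) ≤
          ⟨q.1.1, mem_of_le F h.down⟩ from (leOfHom f).1))
          (u ⟨(leOfHom f).2.trans h.down⟩)
      map_add' := by intro u v; funext h; simp
      map_smul' := by intro r u; funext h; simp }
  map_id p := by
    apply ModuleCat.hom_ext; apply LinearMap.ext; intro u; funext h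
    have e : ∀ v, φ.map (𝟙 (⟨p.1.1, mem_of_le F h.down⟩ : FyP F y)) v = v := by
      intro v; exact LinearMap.congr_fun (congrArg ModuleCat.Hom.hom (φ.map_id _)) v
    exact e (u h)
  map_comp {p q r} f g := by
    apply ModuleCat.hom_ext; apply LinearMap.ext; intro u; funext h
    have e := φ.map_comp
      (homOfLE (show (⟨p.1.1, mem_of_le F ((leOfHom f).2.trans ((leOfHom g).2.trans h.down))⟩ : FyP F y) ≤
        ⟨q.1.1, mem_of_le F ((leOfHom g).2.trans h.down)⟩ from (leOfHom f).1))
      (homOfLE (show (⟨q.1.1, mem_of_le F ((leOfHom g).2.trans h.down)⟩ : FyP F y) ≤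
        ⟨r.1.1, mem_of_le F h.down⟩ from (leOfHom g).1))
    exact LinearMap.congr_fun (congrArg ModuleCat.Hom.hom e) (u ⟨(leOfHom f).2.trans ((leOfHom g).2.trans h.down)⟩)



/-- The right adjoint `(i_y)⋆ : F_{F(y),k} → F_{Γ,k}` of the restriction functor. -/
noncomputable def push (k : Type) [CommRing k] (F : Y →o LowerSet X) (y : Y) :
    (FyP F y ⥤ ModuleCat.{0} k) ⥤ (Gam F ⥤ ModuleCat.{0} k) where
  obj φ := pushObj k F y φ
  map {φ ψ} η :=
    { app := fun p => ModuleCat.ofHom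
        { toFun := fun u h => η.app ⟨p.1.1, mem_of_le F h.down⟩ (u h)
          map_add' := by intro u v; funext h; simp
          map_smul' := by intro r u; funext h; simp }
      naturality := by
        intro p q f
        apply ModuleCat.hom_ext; apply LinearMap.ext; intro u; funext h
        exact LinearMap.congr_fun (congrArg ModuleCat.Hom.hom
          (η.naturality (homOfLE (show (⟨p.1.1, mem_of_le F ((leOfHom f).2.trans h.down)⟩ : FyP F y) ≤
            ⟨q.1.1, mem_of_le F h.down⟩ from (leOfHom f).1))))
          (u ⟨(leOfHom f).2.trans h.down⟩) }
  map_id φ := rfl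
  map_comp f g := rfl

section Aux

variable {X Y : Type} [PartialOrder X] [PartialOrder Y]

lemma le_iy (F : Y →o LowerSet X) (y : Y) (p : Gam F) (h : p.1.2 ≤ y) :
    p ≤ iy F y ⟨p.1.1, mem_of_le F h⟩ := ⟨le_rfl, h⟩

lemma map_comp_apply' {k : Type} [CommRing k] {C : Type} [Category C]
    (M : C ⥤ ModuleCat.{0} k) {p q r : C} (f : p ⟶ q) (g : q ⟶ r) (m : M.obj p) :
    M.map g (M.map f m) = M.map (f ≫ g) m := by
  rw [M.map_comp]; rfl

/-- Forward direction of the hom-set bijection. -/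
noncomputable def fwd (k : Type) [CommRing k] (F : Y →o LowerSet X) (y : Y)
    (M : Gam F ⥤ ModuleCat.{0} k) (φ : FyP F y ⥤ ModuleCat.{0} k)
    (α : (res k F y).obj M ⟶ φ) : M ⟶ (push k F y).obj φ where
  app p := ModuleCat.ofHom
    { toFun := fun m h =>
        α.app ⟨p.1.1, mem_of_le F h.down⟩
          (M.map (homOfLE (le_iy F y p h.down)) m)
      map_add' := by intro u v; funext h; simp; exact map_add _ _ _
      map_smul' := by intro r u; funext h; simp; exact map_smul _ _ _ }
  naturality := by
    intro p q f
    apply ModuleCat.hom_ext; apply LinearMap.ext; intro m; funext h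
    have key : (M.map (homOfLE (le_iy F y q h.down))) (M.map f m)
        = M.map ((iyFunctor F y).map (homOfLE
            (show (⟨p.1.1, mem_of_le F ((leOfHom f).2.trans h.down)⟩ : FyP F y) ≤
              ⟨q.1.1, mem_of_le F h.down⟩ from (leOfHom f).1)))
            (M.map (homOfLE (le_iy F y p ((leOfHom f).2.trans h.down))) m) := by
      have k1 := map_comp_apply' M f (homOfLE (le_iy F y q h.down)) m
      have k2 := map_comp_apply' M (homOfLE (le_iy F y p ((leOfHom f).2.trans h.down)))
        ((iyFunctor F y).map (homOfLE
          (show (⟨p.1.1, mem_of_le F ((leOfHom f).2.trans h.down)⟩ : FyP F y) ≤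
            ⟨q.1.1, mem_of_le F h.down⟩ from (leOfHom f).1))) m
      have k3 : (f ≫ homOfLE (le_iy F y q h.down)) =
          (homOfLE (le_iy F y p ((leOfHom f).2.trans h.down)) ≫ (iyFunctor F y).map (homOfLE
            (show (⟨p.1.1, mem_of_le F ((leOfHom f).2.trans h.down)⟩ : FyP F y) ≤
              ⟨q.1.1, mem_of_le F h.down⟩ from (leOfHom f).1))) := Subsingleton.elim _ _
      exact k1.trans ((congrArg (fun g => M.map g m) k3).trans k2.symm)
    have hnat := LinearMap.congr_fun (congrArg ModuleCat.Hom.hom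
      (α.naturality (homOfLE (show (⟨p.1.1, mem_of_le F ((leOfHom f).2.trans h.down)⟩ : FyP F y) ≤
        ⟨q.1.1, mem_of_le F h.down⟩ from (leOfHom f).1))))
      (M.map (homOfLE (le_iy F y p ((leOfHom f).2.trans h.down))) m)
    have goal' : α.app ⟨q.1.1, mem_of_le F h.down⟩
          ((M.map (homOfLE (le_iy F y q h.down))) ((M.map f) m))
        = φ.map (homOfLE (show (⟨p.1.1, mem_of_le F ((leOfHom f).2.trans h.down)⟩ : FyP F y) ≤
            ⟨q.1.1, mem_of_le F h.down⟩ from (leOfHom f).1))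
          (α.app ⟨p.1.1, mem_of_le F ((leOfHom f).2.trans h.down)⟩
            ((M.map (homOfLE (le_iy F y p ((leOfHom f).2.trans h.down)))) m)) := by
      rw [key]; exact hnat
    exact goal'

/-- Backward direction of the hom-set bijection. -/
noncomputable def bwd (k : Type) [CommRing k] (F : Y →o LowerSet X) (y : Y)
    (M : Gam F ⥤ ModuleCat.{0} k) (φ : FyP F y ⥤ ModuleCat.{0} k)
    (β : M ⟶ (push k F y).obj φ) : (res k F y).obj M ⟶ φ where
  app x := ModuleCat.ofHom
    { toFun := fun m => β.app (iy F y x) m ⟨le_rfl⟩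
      map_add' := by
        intro u v; exact congr_fun (map_add (β.app (iy F y x)).hom u v) ⟨le_rfl⟩
      map_smul' := by
        intro r u; exact congr_fun (map_smul (β.app (iy F y x)).hom r u) ⟨le_rfl⟩ }
  naturality := by
    intro x x' g
    apply ModuleCat.hom_ext; apply LinearMap.ext; intro m
    exact congr_fun (LinearMap.congr_fun (congrArg ModuleCat.Hom.hom
      (β.naturality (homOfLE (show iy F y x ≤ iy F y x' from ⟨leOfHom g, le_rfl⟩)))) m) ⟨le_rfl⟩

end Aux

/-- The functor `(i_y)⋆` is right adjoint to the restriction functor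
`i_y⁻¹ : F_{Γ,k} → F_{F(y),k}` given by precomposition with `i_y`. -/
theorem statement3 (k : Type) [CommRing k] (X Y : Type) [PartialOrder X] [Fintype X]
    [PartialOrder Y] [Fintype Y] (F : Y →o LowerSet X) (y : Y) :
    Nonempty (res k F y ⊣ push k F y) := by
  refine ⟨Adjunction.mkOfHomEquiv
    { homEquiv := fun M φ =>
        { toFun := fwd k F y M φ
          invFun := bwd k F y M φ
          left_inv := ?_
          right_inv := ?_ }
      homEquiv_naturality_left_symm := ?_
      homEquiv_naturality_right := ?_ }⟩
  · intro α
    ext x m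
    dsimp [fwd, bwd, res, iyFunctor, Monotone.functor]
    have e : (homOfLE (le_iy F y (iy F y x) le_rfl)) = 𝟙 (iy F y x) := Subsingleton.elim _ _
    simp only [e, M.map_id]
    exact congrArg (fun v => α.app x v) (LinearMap.congr_fun (congrArg ModuleCat.Hom.hom (M.map_id (iy F y x))) m)
  · intro β
    ext p m
    refine funext (fun h => ?_)
    have hnat := congr_fun (LinearMap.congr_fun (congrArg ModuleCat.Hom.hom
      (β.naturality (homOfLE (le_iy F y p h.down)))) m) (⟨le_rfl⟩ : PLift (y ≤ y))
    have e : ∀ v, φ.map (𝟙 (⟨p.1.1, mem_of_le F h.down⟩ : FyP F y)) v = v := by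
      intro v; exact LinearMap.congr_fun (congrArg ModuleCat.Hom.hom (φ.map_id _)) v
    exact hnat.trans (e _)
  · intro M M' φ f g
    ext x m
    rfl
  · intro M φ φ' f g
    ext p m
    refine funext (fun h => ?_)
    rfl

end PaperInterval
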